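/- In the braid group B_n, the band generators satisfy a_{ts} a_{sr} = a_{sr} a_{tr} for all n ≥ t > s > r ≥ 1. -/
import Mathlib


/-- `descProd a s k` is the product `a (s+k) * a (s+k-1) * ... * a (s+1)`. -/
def descProd {G : Type*} [Group G] (a : ℕ → G) (s : ℕ) : ℕ → G
  | 0 => 1
  | k + 1 => a (s + k + 1) * descProd a s k

/-- The Birman-Ko-Lee band generator
`a_{ts} = (a_{t-1} a_{t-2} ⋯ a_{s+1}) a_s (a_{s+1}⁻¹ ⋯ a_{t-2}⁻¹ a_{t-1}⁻¹)`. -/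
def band {G : Type*} [Group G] (a : ℕ → G) (t s : ℕ) : G :=
  descProd a s (t - s - 1) * a s * (descProd a s (t - s - 1))⁻¹

private lemma descProd_split {G : Type*} [Group G] (a : ℕ → G) (r m : ℕ) :
    ∀ k, descProd a r (m + k) = descProd a (r + m) k * descProd a r m := by
  intro k
  induction k with
  | zero => simp [descProd]
  | succ k ih =>
    show descProd a r (m + k + 1) = _
    simp only [descProd, ih]
    rw [← Nat.add_assoc, mul_assoc]

private lemma descProd_comm {G : Type*} [Group G] (a : ℕ → G) (s : ℕ) (g : G) :
    ∀ k, (∀ j, s + 1 ≤ j → j ≤ s + k → a j * g = g * a j) →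
      descProd a s k * g = g * descProd a s k := by
  intro k
  induction k with
  | zero => simp [descProd]
  | succ k ih =>
    intro h
    simp only [descProd]
    calc a (s + k + 1) * descProd a s k * g
        = a (s + k + 1) * (descProd a s k * g) := by group
      _ = a (s + k + 1) * (g * descProd a s k) := by
          rw [ih (fun j h1 h2 => h j h1 (by omega))]
      _ = (a (s + k + 1) * g) * descProd a s k := by group
      _ = (g * a (s + k + 1)) * descProd a s k := by
          rw [h (s + k + 1) (by omega) (by omega)]
      _ = g * (a (s + k + 1) * descProd a s k) := by group

private lemma conj_comm_aux {G : Type*} [Group G] (x y g : G)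
    (hx : x * g = g * x) (hy : y * g = g * y) :
    (x * y * x⁻¹) * g = g * (x * y * x⁻¹) := by
  have hxi : x⁻¹ * g = g * x⁻¹ := by
    calc x⁻¹ * g = x⁻¹ * (g * x) * x⁻¹ := by group
      _ = x⁻¹ * (x * g) * x⁻¹ := by rw [← hx]
      _ = g * x⁻¹ := by group
  calc x * y * x⁻¹ * g
      = x * y * (x⁻¹ * g) := by group
    _ = x * y * (g * x⁻¹) := by rw [hxi]
    _ = x * (y * g) * x⁻¹ := by group
    _ = x * (g * y) * x⁻¹ := by rw [hy]
    _ = (x * g) * y * x⁻¹ := by group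
    _ = (g * x) * y * x⁻¹ := by rw [hx]
    _ = g * (x * y * x⁻¹) := by group

private lemma band_comm {G : Type*} [Group G] (a : ℕ → G) (s r : ℕ) (g : G)
    (h : ∀ j, r ≤ j → j ≤ r + (s - r - 1) → a j * g = g * a j) :
    band a s r * g = g * band a s r := by
  have hD : descProd a r (s - r - 1) * g = g * descProd a r (s - r - 1) :=
    descProd_comm a r g _ (fun j h1 h2 => h j (by omega) h2)
  exact conj_comm_aux _ _ _ hD (h r le_rfl (by omega))

private lemma braid_step {G : Type*} [Group G] (u v Y : G)
    (h1 : u * v * u = v * u * v) (h2 : u * Y = Y * u)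
    (h3 : v * Y * v = Y * v * Y) :
    u * (v * Y * v⁻¹) * u = (v * Y * v⁻¹) * u * (v * Y * v⁻¹) := by
  have h4 : v⁻¹ * u * v = u * v * u⁻¹ := by
    calc v⁻¹ * u * v = v⁻¹ * (u * v * u) * u⁻¹ := by group
      _ = v⁻¹ * (v * u * v) * u⁻¹ := by rw [h1]
      _ = u * v * u⁻¹ := by group
  have h2i : Y * u⁻¹ = u⁻¹ * Y := by
    calc Y * u⁻¹ = u⁻¹ * (u * Y) * u⁻¹ := by group
      _ = u⁻¹ * (Y * u) * u⁻¹ := by rw [h2]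
      _ = u⁻¹ * Y := by group
  calc u * (v * Y * v⁻¹) * u
      = u * v * Y * (v⁻¹ * u * v) * v⁻¹ := by group
    _ = u * v * Y * (u * v * u⁻¹) * v⁻¹ := by rw [h4]
    _ = u * v * (Y * u) * (v * u⁻¹ * v⁻¹) := by group
    _ = u * v * (u * Y) * (v * u⁻¹ * v⁻¹) := by rw [← h2]
    _ = (u * v * u) * (Y * v * u⁻¹ * v⁻¹) := by group
    _ = (v * u * v) * (Y * v * u⁻¹ * v⁻¹) := by rw [h1]
    _ = v * u * (v * Y * v) * (u⁻¹ * v⁻¹) := by group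
    _ = v * u * (Y * v * Y) * (u⁻¹ * v⁻¹) := by rw [h3]
    _ = v * (u * Y) * v * (Y * u⁻¹) * v⁻¹ := by group
    _ = v * (Y * u) * v * (u⁻¹ * Y) * v⁻¹ := by rw [h2, h2i]
    _ = v * Y * (u * v * u⁻¹) * Y * v⁻¹ := by group
    _ = v * Y * (v⁻¹ * u * v) * Y * v⁻¹ := by rw [← h4]
    _ = (v * Y * v⁻¹) * u * (v * Y * v⁻¹) := by group

private lemma braid_band {G : Type*} [Group G] (n : ℕ) (a : ℕ → G)
    (hbraid : ∀ i, 1 ≤ i → i + 1 ≤ n - 1 →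
      a i * a (i + 1) * a i = a (i + 1) * a i * a (i + 1))
    (hcomm : ∀ i j, 1 ≤ i → i + 2 ≤ j → j ≤ n - 1 → a i * a j = a j * a i) :
    ∀ k r, 1 ≤ r → r + k + 1 ≤ n - 1 →
      a (r + k + 1) * band a (r + k + 1) r * a (r + k + 1)
        = band a (r + k + 1) r * a (r + k + 1) * band a (r + k + 1) r := by
  intro k
  induction k with
  | zero =>
    intro r h1 h2
    have hb : band a (r + 0 + 1) r = a r := by
      have e : (r + 0 + 1) - r - 1 = 0 := by omega
      rw [band, e]
      simp [descProd]
    rw [hb]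
    exact (hbraid r h1 (by omega)).symm
  | succ k ih =>
    intro r h1 h2
    have hband : band a (r + (k + 1) + 1) r
        = a (r + k + 1) * band a (r + k + 1) r * (a (r + k + 1))⁻¹ := by
      have e1 : (r + (k + 1) + 1) - r - 1 = k + 1 := by omega
      have e2 : (r + k + 1) - r - 1 = k := by omega
      rw [band, band, e1, e2]
      simp only [descProd]
      group
    have hY : a (r + k + 2) * band a (r + k + 1) r
        = band a (r + k + 1) r * a (r + k + 2) := by
      have := band_comm a (r + k + 1) r (a (r + k + 2)) (fun j hj1 hj2 => by
        exact hcomm j (r + k + 2) (by omega) (by omega) (by omega))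
      exact this.symm
    have hbr : a (r + k + 2) * a (r + k + 1) * a (r + k + 2)
        = a (r + k + 1) * a (r + k + 2) * a (r + k + 1) :=
      (hbraid (r + k + 1) (by omega) (by omega)).symm
    have h3 : a (r + k + 1) * band a (r + k + 1) r * a (r + k + 1)
        = band a (r + k + 1) r * a (r + k + 1) * band a (r + k + 1) r :=
      ih r h1 (by omega)
    have key := braid_step (a (r + k + 2)) (a (r + k + 1)) (band a (r + k + 1) r)
      hbr hY h3
    show a (r + k + 1 + 1) * band a (r + (k + 1) + 1) r * a (r + k + 1 + 1) = _
    rw [hband]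
    exact key

theorem band_mul_band_eq_band_mul_band' {G : Type*} [Group G] (n : ℕ) (a : ℕ → G)
    (hbraid : ∀ i, 1 ≤ i → i + 1 ≤ n - 1 →
      a i * a (i + 1) * a i = a (i + 1) * a i * a (i + 1))
    (hcomm : ∀ i j, 1 ≤ i → i + 2 ≤ j → j ≤ n - 1 → a i * a j = a j * a i) :
    ∀ t s r, t ≤ n → s < t → r < s → 1 ≤ r →
      band a t s * band a s r = band a s r * band a t r := by
  intro t s r htn hst hrs hr
  set B := descProd a s (t - s - 1) with hB
  set X := band a s r with hX
  -- braid relation between `a s` and `X`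
  have hbr : a s * X * a s = X * a s * X := by
    have := braid_band n a hbraid hcomm (s - r - 1) r hr (by omega)
    have e : r + (s - r - 1) + 1 = s := by omega
    rwa [e] at this
  -- `B` commutes with `X`
  have hBX : B * X = X * B := by
    apply descProd_comm
    intro j hj1 hj2
    exact (band_comm a s r (a j) (fun i hi1 hi2 =>
      hcomm i j (by omega) (by omega) (by omega))).symm
  -- expressing `band a t r`
  have hC : descProd a r (t - r - 1) = B * (a s * descProd a r (s - r - 1)) := by
    have e1 : t - r - 1 = (s - r) + (t - s - 1) := by omega
    have e2 : s - r = (s - r - 1) + 1 := by omega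
    have e3 : r + (s - r) = s := by omega
    rw [e1, descProd_split a r (s - r) (t - s - 1), e3, hB]
    congr 1
    rw [e2]
    simp only [descProd]
    have e4 : r + (s - r - 1) + 1 = s := by omega
    have e5 : s - r - 1 + 1 - 1 = s - r - 1 := by omega
    rw [e4, e5]
  have htr : band a t r = B * (a s * X * (a s)⁻¹) * B⁻¹ := by
    rw [show band a t r = descProd a r (t - r - 1) * a r * (descProd a r (t - r - 1))⁻¹
          from rfl, hC, hX, band]
    group
  have hts : band a t s = B * a s * B⁻¹ := rfl
  -- derived commutations
  have hBX2 : B⁻¹ * X = X * B⁻¹ := by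
    calc B⁻¹ * X = B⁻¹ * (X * B) * B⁻¹ := by group
      _ = B⁻¹ * (B * X) * B⁻¹ := by rw [← hBX]
      _ = X * B⁻¹ := by group
  have hd : a s * X = X * (a s * X * (a s)⁻¹) := by
    calc a s * X = (a s * X * a s) * (a s)⁻¹ := by group
      _ = (X * a s * X) * (a s)⁻¹ := by rw [hbr]
      _ = X * (a s * X * (a s)⁻¹) := by group
  rw [hts, htr]
  calc B * a s * B⁻¹ * X
      = B * a s * (B⁻¹ * X) := by group
    _ = B * a s * (X * B⁻¹) := by rw [hBX2]
    _ = B * (a s * X) * B⁻¹ := by group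
    _ = B * (X * (a s * X * (a s)⁻¹)) * B⁻¹ := by conv_lhs => rw [hd]
    _ = (B * X) * (a s * X * (a s)⁻¹) * B⁻¹ := by group
    _ = (X * B) * (a s * X * (a s)⁻¹) * B⁻¹ := by rw [hBX]
    _ = X * (B * (a s * X * (a s)⁻¹) * B⁻¹) := by group
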